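/- For separable matrix-valued kernels k⃗_i(x,z) = k_i(x,z) L with sup_x k_i(x,x) ≤ κ and tr(L) ≤ τ, the empirical Rademacher complexity of the hypothesis class H_λ^p (functions f = ∑ f_j with l_p aggregated RKHS norm at most λ) satisfies R̂_l(H_λ^p) ≤ λ m √(κτ/l) for any 1 ≤ p ≤ ∞. -/

import Mathlib

open scoped BigOperators RealInnerProductSpace
open Matrix

/-- Sign vector associated with a boolean assignment. -/
def radSign (b : Bool) : ℝ := if b then 1 else -1

lemma radSign_mul_self (b : Bool) : radSign b * radSign b = 1 := by cases b <;> simp [radSign]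

lemma radSign_not (b : Bool) : radSign (!b) = -radSign b := by cases b <;> simp [radSign]

lemma rad_orth {I : Type*} [Fintype I] [DecidableEq I] (u u' : I) (h : u ≠ u') :
    ∑ σ : I → Bool, radSign (σ u) * radSign (σ u') = 0 := by
  apply Finset.sum_ninvolution (fun σ => Function.update σ u (!(σ u)))
  · intro σ
    simp [Function.update_of_ne (Ne.symm h), Function.update_self, radSign_not]
    try ring
  · intro σ hσ
    intro he
    have := congrFun he u
    simp [Function.update_self] at this
  · intro σ; exact Finset.mem_univ _
  · intro σ
    funext t
    by_cases ht : t = u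
    · subst ht; simp
    · simp [Function.update_of_ne ht]

lemma rad_orth_full {I : Type*} [Fintype I] [DecidableEq I] (u u' : I) :
    ∑ σ : I → Bool, radSign (σ u) * radSign (σ u')
      = if u = u' then ((2:ℝ) ^ (Fintype.card I)) else 0 := by
  by_cases h : u = u'
  · subst h
    simp only [if_pos rfl, radSign_mul_self]
    simp [Finset.card_univ, Fintype.card_fun]
  · rw [if_neg h, rad_orth u u' h]

theorem rademacher_bound_separable_dictionary
    {X : Type*} {n m l : ℕ} (hl : 0 < l)
    (H : Fin m → Type) [∀ j, NormedAddCommGroup (H j)] [∀ j, InnerProductSpace ℝ (H j)]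
    (Ksec : ∀ j, X → Fin n → H j)
    -- scalar kernels and a shared PSD output matrix
    (k : Fin m → X → X → ℝ) (L : Matrix (Fin n) (Fin n) ℝ) (hL : L.PosSemidef)
    -- separable kernels:  k⃗ⱼ(x,z)_{ab} = kⱼ(x,z) L_{ab} = ⟪Kⱼ(x)a, Kⱼ(z)b⟫
    (hker : ∀ j x z a b, k j x z * L a b = ⟪Ksec j x a, Ksec j z b⟫)
    (κ τ : ℝ) (hκ : ∀ j x', k j x' x' ≤ κ) (hτ : L.trace ≤ τ)
    (p : ℝ) (hp : 1 ≤ p) (lam : ℝ) (hlam : 0 ≤ lam)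
    (x : Fin l → X) :
    (1 / (l : ℝ)) * ((1 / (2 ^ (n * l) : ℝ)) *
      ∑ σ : Fin l × Fin n → Bool,
        sSup {s : ℝ | ∃ h : ∀ j, H j,
          ((∑ j, ‖h j‖ ^ p) ^ (1 / p)) ≤ lam ∧
          s = ∑ i, ∑ a, radSign (σ (i, a)) * (∑ j, ⟪Ksec j (x i) a, h j⟫)})
    ≤ lam * m * Real.sqrt (κ * τ / l) := by
  classical
  have hp0 : (0:ℝ) < p := lt_of_lt_of_le one_pos hp
  have hl' : (0:ℝ) < l := by exact_mod_cast hl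
  set N : ℝ := (2 ^ (n * l) : ℝ) with hNdef
  have hN : (0:ℝ) < N := by positivity
  have hcard : ((Fintype.card (Fin l × Fin n → Bool) : ℕ) : ℝ) = N := by
    simp [Fintype.card_fun, hNdef, mul_comm l n]
  set v : ∀ j : Fin m, (Fin l × Fin n → Bool) → H j :=
    fun j σ => ∑ u : Fin l × Fin n, radSign (σ u) • Ksec j (x u.1) u.2 with hvdef
  set T : Fin m → ℝ := fun j => ∑ u : Fin l × Fin n, ‖Ksec j (x u.1) u.2‖ ^ 2 with hTdef
  have hTnn : ∀ j, 0 ≤ T j := fun j => Finset.sum_nonneg fun u _ => sq_nonneg _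
  have hdiag : ∀ a, 0 ≤ L a a := fun a => hL.diag_nonneg
  have htrace_nonneg : 0 ≤ L.trace := by
    rw [Matrix.trace]
    exact Finset.sum_nonneg fun a _ => hdiag a
  -- Step 1 : pointwise sSup bound
  have step1 : ∀ σ : Fin l × Fin n → Bool,
      sSup {s : ℝ | ∃ h : ∀ j, H j,
          ((∑ j, ‖h j‖ ^ p) ^ (1 / p)) ≤ lam ∧
          s = ∑ i, ∑ a, radSign (σ (i, a)) * (∑ j, ⟪Ksec j (x i) a, h j⟫)}
        ≤ lam * ∑ j, ‖v j σ‖ := by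
    intro σ
    apply Real.sSup_le
    · rintro s ⟨h, hnorm, rfl⟩
      have hhj : ∀ j, ‖h j‖ ≤ lam := by
        intro j
        have h1 : ‖h j‖ ^ p ≤ ∑ j', ‖h j'‖ ^ p :=
          Finset.single_le_sum (fun j' _ => Real.rpow_nonneg (norm_nonneg _) p)
            (Finset.mem_univ j)
        have h2 : (‖h j‖ ^ p) ^ (1/p) ≤ (∑ j', ‖h j'‖ ^ p) ^ (1/p) :=
          Real.rpow_le_rpow (Real.rpow_nonneg (norm_nonneg _) p) h1 (by positivity)
        have h3 : (‖h j‖ ^ p) ^ (1/p) = ‖h j‖ := by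
          rw [← Real.rpow_mul (norm_nonneg _), mul_one_div, div_self hp0.ne', Real.rpow_one]
        calc ‖h j‖ = (‖h j‖ ^ p) ^ (1/p) := h3.symm
          _ ≤ (∑ j', ‖h j'‖ ^ p) ^ (1/p) := h2
          _ ≤ lam := hnorm
      have key : ∑ i, ∑ a, radSign (σ (i, a)) * (∑ j, ⟪Ksec j (x i) a, h j⟫)
          = ∑ j, ⟪v j σ, h j⟫ := by
        have swap : ∑ i, ∑ a, radSign (σ (i, a)) * (∑ j, ⟪Ksec j (x i) a, h j⟫)
            = ∑ u : Fin l × Fin n, radSign (σ u) * (∑ j, ⟪Ksec j (x u.1) u.2, h j⟫) :=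
          (Fintype.sum_prod_type (f := fun u : Fin l × Fin n =>
            radSign (σ u) * (∑ j, ⟪Ksec j (x u.1) u.2, h j⟫))).symm
        rw [swap]
        calc ∑ u : Fin l × Fin n, radSign (σ u) * (∑ j, ⟪Ksec j (x u.1) u.2, h j⟫)
            = ∑ u : Fin l × Fin n, ∑ j, ⟪radSign (σ u) • Ksec j (x u.1) u.2, h j⟫ := by
              simp_rw [Finset.mul_sum, real_inner_smul_left]
          _ = ∑ j, ∑ u : Fin l × Fin n, ⟪radSign (σ u) • Ksec j (x u.1) u.2, h j⟫ :=
              Finset.sum_comm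
          _ = ∑ j, ⟪v j σ, h j⟫ := by
              simp_rw [hvdef, ← sum_inner]
      rw [key]
      calc ∑ j, ⟪v j σ, h j⟫ ≤ ∑ j, ‖v j σ‖ * ‖h j‖ :=
          Finset.sum_le_sum fun j _ => real_inner_le_norm _ _
        _ ≤ ∑ j, ‖v j σ‖ * lam :=
          Finset.sum_le_sum fun j _ => mul_le_mul_of_nonneg_left (hhj j) (norm_nonneg _)
        _ = lam * ∑ j, ‖v j σ‖ := by rw [← Finset.sum_mul]; ring
    · positivity
  -- Step 2 : second moment identity
  have step2 : ∀ j, ∑ σ : Fin l × Fin n → Bool, ‖v j σ‖ ^ 2 = N * T j := by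
    intro j
    have expand : ∀ σ : Fin l × Fin n → Bool, ‖v j σ‖ ^ 2
        = ∑ u : Fin l × Fin n, ∑ u' : Fin l × Fin n,
            (radSign (σ u) * radSign (σ u')) * ⟪Ksec j (x u.1) u.2, Ksec j (x u'.1) u'.2⟫ := by
      intro σ
      rw [← real_inner_self_eq_norm_sq, hvdef]
      rw [sum_inner]
      refine Finset.sum_congr rfl fun u _ => ?_
      rw [inner_sum]
      refine Finset.sum_congr rfl fun u' _ => ?_
      rw [real_inner_smul_left, real_inner_smul_right]
      ring
    calc ∑ σ : Fin l × Fin n → Bool, ‖v j σ‖ ^ 2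
        = ∑ u : Fin l × Fin n, ∑ u' : Fin l × Fin n,
            (∑ σ : Fin l × Fin n → Bool, radSign (σ u) * radSign (σ u'))
              * ⟪Ksec j (x u.1) u.2, Ksec j (x u'.1) u'.2⟫ := by
          simp_rw [expand]
          rw [Finset.sum_comm]
          refine Finset.sum_congr rfl fun u _ => ?_
          rw [Finset.sum_comm]
          refine Finset.sum_congr rfl fun u' _ => ?_
          rw [Finset.sum_mul]
      _ = ∑ u : Fin l × Fin n, N * ⟪Ksec j (x u.1) u.2, Ksec j (x u.1) u.2⟫ := by
          refine Finset.sum_congr rfl fun u _ => ?_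
          simp_rw [rad_orth_full, ite_mul, zero_mul]
          rw [Finset.sum_ite_eq _ u]
          have hN2 : ((2:ℝ) ^ (Fintype.card (Fin l × Fin n))) = N := by
            rw [← hcard]; push_cast [Fintype.card_fun]; simp
          rw [if_pos (Finset.mem_univ u), hN2]
      _ = N * T j := by
          rw [hTdef, Finset.mul_sum]
          refine Finset.sum_congr rfl fun u _ => ?_
          rw [real_inner_self_eq_norm_sq]
  -- Step 3 : first moment bound
  have step3 : ∀ j, ∑ σ : Fin l × Fin n → Bool, ‖v j σ‖ ≤ N * Real.sqrt (T j) := by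
    intro j
    have hA : (0:ℝ) ≤ ∑ σ : Fin l × Fin n → Bool, ‖v j σ‖ :=
      Finset.sum_nonneg fun _ _ => norm_nonneg _
    have h1 : (∑ σ : Fin l × Fin n → Bool, ‖v j σ‖) ^ 2
        ≤ N * (N * T j) := by
      calc (∑ σ : Fin l × Fin n → Bool, ‖v j σ‖) ^ 2
          ≤ (Finset.univ.card : ℝ) * ∑ σ : Fin l × Fin n → Bool, ‖v j σ‖ ^ 2 :=
            sq_sum_le_card_mul_sum_sq
        _ = N * (N * T j) := by rw [Finset.card_univ, hcard, step2 j]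
    calc (∑ σ : Fin l × Fin n → Bool, ‖v j σ‖)
        = Real.sqrt ((∑ σ : Fin l × Fin n → Bool, ‖v j σ‖) ^ 2) := (Real.sqrt_sq hA).symm
      _ ≤ Real.sqrt (N * (N * T j)) := Real.sqrt_le_sqrt h1
      _ = N * Real.sqrt (T j) := by
          rw [← mul_assoc, ← sq, Real.sqrt_mul (by positivity), Real.sqrt_sq hN.le]
  -- Step 5 : trace formula
  have step5 : ∀ j, T j = L.trace * ∑ i, k j (x i) (x i) := by
    intro j
    rw [hTdef]
    calc ∑ u : Fin l × Fin n, ‖Ksec j (x u.1) u.2‖ ^ 2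
        = ∑ u : Fin l × Fin n, k j (x u.1) (x u.1) * L u.2 u.2 := by
          refine Finset.sum_congr rfl fun u _ => ?_
          rw [← real_inner_self_eq_norm_sq, ← hker]
      _ = ∑ i, ∑ a, k j (x i) (x i) * L a a :=
          Fintype.sum_prod_type (f := fun u : Fin l × Fin n => k j (x u.1) (x u.1) * L u.2 u.2)
      _ = (∑ i, k j (x i) (x i)) * (∑ a, L a a) := by
          rw [Finset.sum_mul_sum]
      _ = L.trace * ∑ i, k j (x i) (x i) := by
          rw [Matrix.trace, mul_comm]
          rfl
  -- Combine steps 1–3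
  have main : (1 / (l : ℝ)) * ((1 / N) *
      ∑ σ : Fin l × Fin n → Bool,
        sSup {s : ℝ | ∃ h : ∀ j, H j,
          ((∑ j, ‖h j‖ ^ p) ^ (1 / p)) ≤ lam ∧
          s = ∑ i, ∑ a, radSign (σ (i, a)) * (∑ j, ⟪Ksec j (x i) a, h j⟫)})
      ≤ (1 / (l:ℝ)) * lam * ∑ j, Real.sqrt (T j) := by
    have h1 : ∑ σ : Fin l × Fin n → Bool,
        sSup {s : ℝ | ∃ h : ∀ j, H j,
          ((∑ j, ‖h j‖ ^ p) ^ (1 / p)) ≤ lam ∧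
          s = ∑ i, ∑ a, radSign (σ (i, a)) * (∑ j, ⟪Ksec j (x i) a, h j⟫)}
        ≤ ∑ σ : Fin l × Fin n → Bool, lam * ∑ j, ‖v j σ‖ :=
      Finset.sum_le_sum fun σ _ => step1 σ
    have h2 : ∑ σ : Fin l × Fin n → Bool, lam * ∑ j, ‖v j σ‖
        = lam * ∑ j, ∑ σ : Fin l × Fin n → Bool, ‖v j σ‖ := by
      rw [← Finset.mul_sum, Finset.sum_comm]
    have h3 : lam * ∑ j, ∑ σ : Fin l × Fin n → Bool, ‖v j σ‖
        ≤ lam * ∑ j, N * Real.sqrt (T j) := by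
      apply mul_le_mul_of_nonneg_left _ hlam
      exact Finset.sum_le_sum fun j _ => step3 j
    calc (1 / (l : ℝ)) * ((1 / N) * ∑ σ : Fin l × Fin n → Bool,
        sSup {s : ℝ | ∃ h : ∀ j, H j,
          ((∑ j, ‖h j‖ ^ p) ^ (1 / p)) ≤ lam ∧
          s = ∑ i, ∑ a, radSign (σ (i, a)) * (∑ j, ⟪Ksec j (x i) a, h j⟫)})
        ≤ (1 / (l : ℝ)) * ((1 / N) * (lam * ∑ j, N * Real.sqrt (T j))) := by
          apply mul_le_mul_of_nonneg_left _ (by positivity)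
          apply mul_le_mul_of_nonneg_left _ (by positivity)
          exact le_trans h1 (h2 ▸ h3)
      _ = (1 / (l:ℝ)) * lam * ∑ j, Real.sqrt (T j) := by
          rw [← Finset.mul_sum]
          field_simp
  -- Final comparison
  refine le_trans main ?_
  by_cases hκτ : 0 ≤ κ * τ
  · -- bound each T j by l * (κ * τ)
    have hTb : ∀ j, T j ≤ (l:ℝ) * (κ * τ) := by
      intro j
      rw [step5 j]
      rcases eq_or_lt_of_le htrace_nonneg with h0 | hpos
      · rw [← h0, zero_mul]
        positivity
      · obtain ⟨a, -, ha⟩ : ∃ a ∈ Finset.univ, (0:ℝ) < L a a := by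
          by_contra hcon
          push_neg at hcon
          have : L.trace = 0 := by
            rw [Matrix.trace]
            exact le_antisymm (Finset.sum_nonpos fun a haa => hcon a haa) htrace_nonneg
          exact absurd this.symm (ne_of_lt hpos)
        have hknn : ∀ j' i, 0 ≤ k j' (x i) (x i) := by
          intro j' i
          have h2 : 0 ≤ k j' (x i) (x i) * L a a := by
            rw [hker]; exact real_inner_self_nonneg
          nlinarith
        have hκ0 : 0 ≤ κ := le_trans (hknn j ⟨0, hl⟩) (hκ j (x ⟨0, hl⟩))
        have hsum : ∑ i, k j (x i) (x i) ≤ (l:ℝ) * κ := by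
          calc ∑ i, k j (x i) (x i) ≤ ∑ _i : Fin l, κ :=
              Finset.sum_le_sum fun i _ => hκ j (x i)
            _ = (l:ℝ) * κ := by simp [mul_comm]
        calc L.trace * ∑ i, k j (x i) (x i) ≤ L.trace * ((l:ℝ) * κ) :=
            mul_le_mul_of_nonneg_left hsum hpos.le
          _ ≤ τ * ((l:ℝ) * κ) := mul_le_mul_of_nonneg_right hτ (by positivity)
          _ = (l:ℝ) * (κ * τ) := by ring
    have hsq : Real.sqrt ((l:ℝ) * (κ * τ)) = (l:ℝ) * Real.sqrt (κ * τ / l) := by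
      have heq : (l:ℝ) * (κ * τ) = (l:ℝ)^2 * (κ * τ / l) := by field_simp
      rw [heq, Real.sqrt_mul (by positivity), Real.sqrt_sq hl'.le]
    have hsumT : ∑ j, Real.sqrt (T j) ≤ (m:ℝ) * ((l:ℝ) * Real.sqrt (κ * τ / l)) := by
      calc ∑ j, Real.sqrt (T j) ≤ ∑ _j : Fin m, (l:ℝ) * Real.sqrt (κ * τ / l) :=
          Finset.sum_le_sum fun j _ => by
            rw [← hsq]; exact Real.sqrt_le_sqrt (hTb j)
        _ = (m:ℝ) * ((l:ℝ) * Real.sqrt (κ * τ / l)) := by simp [mul_comm]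
    calc (1 / (l:ℝ)) * lam * ∑ j, Real.sqrt (T j)
        ≤ (1 / (l:ℝ)) * lam * ((m:ℝ) * ((l:ℝ) * Real.sqrt (κ * τ / l))) := by
          apply mul_le_mul_of_nonneg_left hsumT (by positivity)
      _ = lam * m * Real.sqrt (κ * τ / l) := by
          field_simp
  · -- degenerate case : κ * τ < 0
    push_neg at hκτ
    have hTz : ∀ j, T j = 0 := by
      intro j
      have htr : L.trace = 0 := by
        by_contra h0
        have hpos : 0 < L.trace := lt_of_le_of_ne htrace_nonneg (Ne.symm h0)
        obtain ⟨a, -, ha⟩ : ∃ a ∈ Finset.univ, (0:ℝ) < L a a := by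
          by_contra hcon
          push_neg at hcon
          have : L.trace = 0 := by
            rw [Matrix.trace]
            exact le_antisymm (Finset.sum_nonpos fun a haa => hcon a haa) htrace_nonneg
          exact absurd this h0
        have hknn : 0 ≤ k j (x ⟨0, hl⟩) (x ⟨0, hl⟩) := by
          have h2 : 0 ≤ k j (x ⟨0, hl⟩) (x ⟨0, hl⟩) * L a a := by
            rw [hker]; exact real_inner_self_nonneg
          nlinarith
        have hκ0 : 0 ≤ κ := le_trans hknn (hκ j (x ⟨0, hl⟩))
        have hτ0 : 0 < τ := lt_of_lt_of_le hpos hτ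
        nlinarith
      rw [step5 j, htr, zero_mul]
    have hrhs : Real.sqrt (κ * τ / l) = 0 := by
      apply Real.sqrt_eq_zero_of_nonpos
      apply div_nonpos_of_nonpos_of_nonneg (le_of_lt hκτ) hl'.le
    rw [hrhs]
    simp [hTz]
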